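/- Let (V, E) be a finite endo-trivial reflexive tournament with at least three vertices, and set n = Fintype.card V. Then (V, E) contains a directed Hamilton cycle: there is a bijection σ : ZMod n ≃ V such that E (σ i) (σ (i + 1)) holds for every i : ZMod n. -/

import Mathlib

/-- An endomorphism of the digraph `(V, E)`. -/
def IsEndo {V : Type*} (E : V → V → Prop) (h : V → V) : Prop :=
  ∀ u v, E u v → E (h u) (h v)

/-- An automorphism of the digraph `(V, E)`: a bijective endomorphism whose inverse is
a homomorphism. -/
def IsAuto {V : Type*} (E : V → V → Prop) (h : V → V) : Prop :=
  IsEndo E h ∧ ∃ g : V → V,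
    Function.LeftInverse g h ∧ Function.RightInverse g h ∧ IsEndo E g

/-- A digraph is endo-trivial if every endomorphism is an automorphism or a constant map. -/
def EndoTrivial {V : Type*} (E : V → V → Prop) : Prop :=
  ∀ h : V → V, IsEndo E h → (IsAuto E h ∨ ∃ z : V, ∀ v, h v = z)

namespace Stmt5Aux

variable {V : Type*} (E : V → V → Prop)

/-- A directed cycle `a → t₀ → t₁ → ⋯ → a`. -/
def Cyc (a : V) (t : List V) : Prop := List.Chain E a (t ++ [a])

variable {E}

lemma cyc_rotate {a p : V} {m l2 : List V} (h : Cyc E a (m ++ p :: l2)) :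
    Cyc E p (l2 ++ a :: m) := by
  unfold Cyc at *
  have h' : List.Chain E a (m ++ p :: (l2 ++ [a])) := by
    simpa using h
  unfold List.Chain at h'
  rw [List.isChain_cons_split] at h'
  have goal' : List.Chain E p (l2 ++ a :: (m ++ [p])) := by
    unfold List.Chain
    rw [List.isChain_cons_split]
    exact ⟨h'.2, h'.1⟩
  simpa using goal'

lemma cyc_rotate_mem {a p : V} {t : List V} (h : Cyc E a t) (hp : p ∈ a :: t) :
    ∃ t', Cyc E p t' ∧ (p :: t').Perm (a :: t) := by
  rcases List.mem_cons.1 hp with rfl | hp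
  · exact ⟨t, h, List.Perm.refl _⟩
  · obtain ⟨m, l2, rfl⟩ := List.append_of_mem hp
    refine ⟨l2 ++ a :: m, cyc_rotate h, ?_⟩
    have h1 : ((p :: l2) ++ a :: m).Perm (a :: ((p :: l2) ++ m)) := List.perm_middle
    have h2 : (p :: (l2 ++ m)).Perm (p :: (m ++ l2)) := List.Perm.cons p List.perm_append_comm
    have h3 : (p :: (m ++ l2)).Perm (m ++ p :: l2) := List.perm_middle.symm
    have h4 := h1.trans (List.Perm.cons a (h2.trans h3))
    simpa using h4

variable (htour : ∀ u v : V, u ≠ v → Xor' (E u v) (E v u))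
include htour

lemma insert_chain {v : V} :
    ∀ (l : List V) (x : V), List.Chain E x l → E x v → (∀ b ∈ l, b ≠ v) →
      (∃ b ∈ l, E v b) →
      ∃ l1 l2, l = l1 ++ l2 ∧ l2 ≠ [] ∧ List.Chain E x (l1 ++ v :: l2) := by
  intro l
  induction l with
  | nil => intro x _ _ _ hex; simp at hex
  | cons b rest ih =>
    intro x hch hxv hne hex
    unfold List.Chain at hch
    rw [List.chain_cons] at hch
    by_cases hvb : E v b
    · exact ⟨[], b :: rest, rfl, by simp, by
        simp only [List.nil_append]
        unfold List.Chain
        rw [List.chain_cons]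
        exact ⟨hxv, List.chain_cons.2 ⟨hvb, hch.2⟩⟩⟩
    · have hbv : E b v := by
        rcases htour b v (hne b (by simp)) with h | h
        · exact h.1
        · exact absurd h.1 hvb
      obtain ⟨q, hq, hvq⟩ := hex
      have hq' : q ∈ rest := by
        rcases List.mem_cons.1 hq with rfl | hq'
        · exact absurd hvq hvb
        · exact hq'
      obtain ⟨l1, l2, heq, hl2, hch'⟩ :=
        ih b hch.2 hbv (fun c hc => hne c (by simp [hc])) ⟨q, hq', hvq⟩
      exact ⟨b :: l1, l2, by simp [heq], hl2, by
        rw [List.cons_append]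
        unfold List.Chain
        rw [List.chain_cons]
        exact ⟨hch.1, hch'⟩⟩

lemma cyc_insert {p v : V} {t' : List V} (hc : Cyc E p t') (hpv : E p v)
    (hv : v ∉ p :: t') (hex : ∃ q ∈ t', E v q) :
    ∃ t'', Cyc E p t'' ∧ (p :: t'').Perm (v :: p :: t') := by
  have hne : ∀ b ∈ t' ++ [p], b ≠ v := by
    intro b hb
    rcases List.mem_append.1 hb with hb | hb
    · exact fun h => hv (by simp [h ▸ hb])
    · simp only [List.mem_singleton] at hb
      subst hb; exact fun h => hv (by simp [h])
  obtain ⟨q, hq, hvq⟩ := hex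
  obtain ⟨l1, l2, heq, hl2, hch⟩ :=
    insert_chain htour (t' ++ [p]) p hc hpv hne ⟨q, List.mem_append.2 (Or.inl hq), hvq⟩
  rcases (List.eq_nil_or_concat l2) with rfl | ⟨L, z, rfl⟩
  · exact absurd rfl hl2
  · rw [List.concat_eq_append] at heq hch
    have heq' : t' ++ [p] = (l1 ++ L) ++ [z] := by rw [heq]; simp
    obtain ⟨ht', hz⟩ := List.append_inj' heq' (by simp)
    have hz' : z = p := by simpa using hz.symm
    rw [hz'] at hch
    refine ⟨l1 ++ v :: L, ?_, ?_⟩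
    · unfold Cyc
      have hch' : List.Chain E p (l1 ++ v :: (L ++ [p])) := hch
      simpa using hch'
    · have h1 : (p :: (l1 ++ v :: L)).Perm (p :: (v :: (l1 ++ L))) :=
        List.Perm.cons p List.perm_middle
      have h2 : (p :: v :: (l1 ++ L)).Perm (v :: p :: (l1 ++ L)) :=
        List.Perm.swap v p _
      have h3 : v :: p :: (l1 ++ L) = v :: p :: t' := by rw [ht']
      exact (h1.trans h2).trans (h3 ▸ List.Perm.refl _)

omit htour

lemma chain_replace_last {w : V} :
    ∀ (t : List V) (x c : V), List.Chain E x (t ++ [c]) → (∀ p ∈ x :: t, E p w) →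
      List.Chain E x (t ++ [w]) := by
  intro t
  induction t with
  | nil =>
    intro x c _ hdom
    simpa [List.Chain] using List.chain_cons.2 ⟨hdom x (by simp), List.Chain.nil⟩
  | cons b t2 ih =>
    intro x c hch hdom
    unfold List.Chain at hch ⊢
    rw [List.cons_append, List.chain_cons] at hch ⊢
    exact ⟨hch.1, ih b c hch.2 (fun p hp => hdom p (by
      rcases List.mem_cons.1 hp with rfl | hp
      · simp
      · simp [hp]))⟩

lemma cyc_extend2 {a w x : V} {t : List V} (hc : Cyc E a t)
    (hdom : ∀ p ∈ a :: t, E p w) (hwx : E w x) (hxa : E x a) :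
    Cyc E a (t ++ [w, x]) := by
  unfold Cyc at *
  have h1 : List.Chain E a (t ++ [w]) := chain_replace_last t a a hc hdom
  have goal' : List.Chain E a (t ++ w :: [x, a]) := by
    unfold List.Chain
    rw [List.isChain_cons_split]
    exact ⟨h1, List.chain_cons.2 ⟨hwx, List.chain_cons.2 ⟨hxa, List.Chain.nil⟩⟩⟩
  simpa using goal'

section Extend

variable [Fintype V]
variable (hrefl : ∀ v, E v v)
variable (hstrong : ∀ S : Set V, S.Nonempty → Sᶜ.Nonempty → ∃ u ∈ S, ∃ w ∈ Sᶜ, E u w)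

include htour hstrong in
lemma extend_step {a : V} {t : List V} (hc : Cyc E a t) (hnd : (a :: t).Nodup)
    (hlen : (a :: t).length < Fintype.card V) :
    ∃ a' t', Cyc E a' t' ∧ (a' :: t').Nodup ∧ (a :: t).length < (a' :: t').length := by
  classical
  -- there is a vertex outside the cycle
  obtain ⟨v, hv⟩ : ∃ v, v ∉ a :: t := by
    by_contra hall
    push_neg at hall
    have hfin : (a :: t).toFinset = Finset.univ := by
      ext x; simpa using hall x
    have : Fintype.card V = (a :: t).length := by
      rw [← List.toFinset_card_of_nodup hnd, hfin, Finset.card_univ]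
    omega
  by_cases hins : ∃ v, v ∉ a :: t ∧ (∃ p ∈ a :: t, E p v) ∧ (∃ q ∈ a :: t, E v q)
  · -- insertion case
    obtain ⟨v, hv, ⟨p, hp, hpv⟩, ⟨q, hq, hvq⟩⟩ := hins
    obtain ⟨t', hc', hperm⟩ := cyc_rotate_mem hc hp
    have hv' : v ∉ p :: t' := fun h => hv (hperm.mem_iff.1 h)
    have hpvne : p ≠ v := fun h => hv (h ▸ hp)
    have hq' : q ∈ t' := by
      have hqmem : q ∈ p :: t' := hperm.mem_iff.2 hq
      rcases List.mem_cons.1 hqmem with rfl | hq'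
      · rcases htour q v hpvne with h | h
        · exact absurd hvq h.2
        · exact absurd hpv h.2
      · exact hq'
    obtain ⟨t'', hc'', hperm2⟩ := cyc_insert htour hc' hpv hv' ⟨q, hq', hvq⟩
    refine ⟨p, t'', hc'', ?_, ?_⟩
    · rw [hperm2.nodup_iff]
      exact List.nodup_cons.2 ⟨hv', hperm.nodup_iff.2 hnd⟩
    · have h1 := hperm2.length_eq
      have h2 := hperm.length_eq
      simp only [List.length_cons] at *
      omega
  · -- uniform case
    push_neg at hins
    have huni : ∀ v, v ∉ a :: t → (∀ p ∈ a :: t, E p v) ∨ (∀ p ∈ a :: t, E v p) := by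
      intro v hv
      by_cases h1 : ∃ p ∈ a :: t, E p v
      · left
        intro p hp
        have h2 := hins v hv h1
        by_contra hpv
        have hne : p ≠ v := fun h => hv (h ▸ hp)
        rcases htour p v hne with h | h
        · exact hpv h.1
        · exact h2 p hp h.1
      · right
        intro p hp
        push_neg at h1
        have hne : v ≠ p := fun h => hv (h ▸ hp)
        rcases htour v p hne with h | h
        · exact h.1
        · exact absurd h.1 (h1 p hp)
    -- O1 : vertices dominated by the whole cycle
    set O1 : Set V := {w | w ∉ a :: t ∧ ∀ p ∈ a :: t, E p w} with hO1def
    have hO1ne : O1.Nonempty := by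
      obtain ⟨u, hu, w, hw, huw⟩ :=
        hstrong {x | x ∈ a :: t} ⟨a, by simp⟩ ⟨v, hv⟩
      have hw' : w ∉ a :: t := hw
      refine ⟨w, hw', ?_⟩
      rcases huni w hw' with h | h
      · exact h
      · exfalso
        have hne : u ≠ w := fun heq => hw' (heq ▸ hu)
        rcases htour u w hne with hx | hx
        · exact hx.2 (h u hu)
        · exact hx.2 huw
    have haO1 : a ∈ O1ᶜ := fun h => h.1 (by simp)
    obtain ⟨w, hwO1, x, hx, hwx⟩ := hstrong O1 hO1ne ⟨a, haO1⟩
    have hwmem : w ∉ a :: t := hwO1.1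
    have hwdom : ∀ p ∈ a :: t, E p w := hwO1.2
    have hxmem : x ∉ a :: t := by
      intro hxin
      have hne : x ≠ w := fun h => hwmem (h ▸ hxin)
      rcases htour x w hne with h | h
      · exact h.2 hwx
      · exact h.2 (hwdom x hxin)
    have hxout : ∀ p ∈ a :: t, E x p := by
      rcases huni x hxmem with h | h
      · exact absurd ⟨hxmem, h⟩ hx
      · exact h
    have hwxne : w ≠ x := by
      intro h
      have h1 : E a w := hwdom a (by simp)
      have h2 : E x a := hxout a (by simp)
      have hne : a ≠ w := fun heq => hwmem (heq ▸ (by simp : a ∈ a :: t))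
      rcases htour a w hne with hh | hh
      · exact hh.2 (h ▸ h2)
      · exact hh.2 h1
    refine ⟨a, t ++ [w, x], cyc_extend2 hc hwdom hwx (hxout a (by simp)), ?_, by simp⟩
    · have : a :: (t ++ [w, x]) = (a :: t) ++ [w, x] := by simp
      rw [this, List.nodup_append]
      refine ⟨hnd, by simp [hwxne], ?_⟩
      intro b hb c hmem hbc
      subst hbc
      rcases List.mem_cons.1 hmem with rfl | hmem
      · exact hwmem hb
      · rcases List.mem_cons.1 hmem with rfl | hmem
        · exact hxmem hb
        · simp at hmem

include htour hstrong in
lemma grow : ∀ (k : ℕ) (a : V) (t : List V), Cyc E a t → (a :: t).Nodup →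
    Fintype.card V - (a :: t).length ≤ k →
    ∃ a' t', Cyc E a' t' ∧ (a' :: t').Nodup ∧ (a' :: t').length = Fintype.card V := by
  intro k
  induction k with
  | zero =>
    intro a t hc hnd hk
    have h1 := hnd.length_le_card
    exact ⟨a, t, hc, hnd, by omega⟩
  | succ k ih =>
    intro a t hc hnd hk
    have h1 := hnd.length_le_card
    by_cases heq : (a :: t).length = Fintype.card V
    · exact ⟨a, t, hc, hnd, heq⟩
    · obtain ⟨a', t', hc', hnd', hlen'⟩ := extend_step htour hstrong hc hnd (by omega)
      have h2 := hnd'.length_le_card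
      exact ih a' t' hc' hnd' (by omega)

end Extend

end Stmt5Aux

open Stmt5Aux in
/-- A finite endo-trivial reflexive tournament with at least three vertices
contains a directed Hamilton cycle. -/
theorem stmt5 {V : Type*} [Fintype V] (E : V → V → Prop)
    (hrefl : ∀ v, E v v)
    (htour : ∀ u v : V, u ≠ v → Xor' (E u v) (E v u))
    (hcard : 3 ≤ Fintype.card V)
    (hendo : EndoTrivial E) :
    ∃ σ : ZMod (Fintype.card V) ≃ V, ∀ i : ZMod (Fintype.card V), E (σ i) (σ (i + 1)) := by
  classical
  -- Step 1: endo-triviality implies strong connectivity.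
  have hstrong : ∀ S : Set V, S.Nonempty → Sᶜ.Nonempty → ∃ u ∈ S, ∃ w ∈ Sᶜ, E u w := by
    intro S ⟨s0, hs0⟩ ⟨c0, hc0⟩
    by_contra hno
    push_neg at hno
    have hcross : ∀ u w : V, u ∈ S → w ∉ S → E w u := by
      intro u w hu hw
      have hne : u ≠ w := fun h => hw (h ▸ hu)
      rcases htour u w hne with h | h
      · exact absurd h.1 (hno u hu w hw)
      · exact h.1
    have hs0c0 : s0 ≠ c0 := fun h => hc0 (h ▸ hs0)
    by_cases h2 : ∃ c1, c1 ∉ S ∧ c1 ≠ c0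
    · obtain ⟨c1, hc1, hc1c0⟩ := h2
      set h : V → V := fun x => if x ∈ S then x else c0 with hdef
      have hend : IsEndo E h := by
        intro u v huv
        by_cases hu : u ∈ S <;> by_cases hv : v ∈ S <;>
          simp only [hdef, if_pos, if_neg, hu, hv, if_true, if_false]
        · exact huv
        · exact absurd huv (hno u hu v hv)
        · exact hcross v c0 hv hc0
        · exact hrefl c0
      rcases hendo h hend with ⟨_, g, hg, _, _⟩ | ⟨z, hz⟩
      · have hinj : Function.Injective h := hg.injective
        have e1 : h c0 = c0 := by simp [hdef, hc0]
        have e2 : h c1 = c0 := by simp [hdef, hc1]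
        exact hc1c0 (hinj (e2.trans e1.symm))
      · have e1 : h s0 = s0 := by simp [hdef, hs0]
        have e2 : h c0 = c0 := by simp [hdef, hc0]
        exact hs0c0 ((e1.symm.trans (hz s0)).trans ((hz c0).symm.trans e2))
    · -- Sᶜ = {c0}; S has at least two elements
      push_neg at h2
      obtain ⟨s1, hs1, hs1s0⟩ : ∃ s1, s1 ∈ S ∧ s1 ≠ s0 := by
        by_contra hall
        push_neg at hall
        have : ∀ x : V, x = s0 ∨ x = c0 := by
          intro x
          by_cases hx : x ∈ S
          · exact Or.inl (hall x hx)
          · exact Or.inr (h2 x hx)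
        have hle : Fintype.card V ≤ 2 := by
          have : (Finset.univ : Finset V) ⊆ {s0, c0} := by
            intro x _
            rcases this x with rfl | rfl <;> simp
          calc Fintype.card V = Finset.univ.card := rfl
            _ ≤ ({s0, c0} : Finset V).card := Finset.card_le_card this
            _ ≤ 2 := Finset.card_insert_le _ _ |>.trans (by simp)
        omega
      set h : V → V := fun x => if x ∈ S then s0 else x with hdef
      have hend : IsEndo E h := by
        intro u v huv
        by_cases hu : u ∈ S <;> by_cases hv : v ∈ S <;>
          simp only [hdef, if_pos, if_neg, hu, hv, if_true, if_false]
        · exact hrefl s0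
        · exact absurd huv (hno u hu v hv)
        · exact hcross s0 u hs0 hu
        · exact huv
      rcases hendo h hend with ⟨_, g, hg, _, _⟩ | ⟨z, hz⟩
      · have hinj : Function.Injective h := hg.injective
        have e1 : h s0 = s0 := by simp [hdef, hs0]
        have e2 : h s1 = s0 := by simp [hdef, hs1]
        exact hs1s0 (hinj (e2.trans e1.symm))
      · have e1 : h s0 = s0 := by simp [hdef, hs0]
        have e2 : h c0 = c0 := by
          show (if c0 ∈ S then s0 else c0) = c0
          exact if_neg hc0
        exact hs0c0 ((e1.symm.trans (hz s0)).trans ((hz c0).symm.trans e2))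
  -- Step 2: grow a Hamiltonian cycle
  have hne : Nonempty V := by
    rw [← Fintype.card_pos_iff]; omega
  obtain ⟨v0⟩ := hne
  have hbase : Cyc E v0 [] := by
    unfold Cyc
    simpa [List.Chain] using List.chain_cons.2 ⟨hrefl v0, List.Chain.nil⟩
  obtain ⟨a, t, hc, hnd, hlen⟩ :=
    grow htour hstrong (Fintype.card V) v0 [] hbase (by simp) (by omega)
  set n := Fintype.card V with hn
  set l := a :: t with hl
  haveI : NeZero n := ⟨by omega⟩
  have hlne : l ≠ [] := by simp [hl]
  -- split the cycle into a chain and a wrap edge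
  have hchain' : List.Chain' E l ∧ E (l.getLast hlne) a := by
    have h1 : List.Chain' E (l ++ [a]) := by
      have : l ++ [a] = a :: (t ++ [a]) := by simp [hl]
      rw [this]
      exact hc
    unfold List.Chain' at h1
    rw [List.isChain_append] at h1
    refine ⟨h1.1, ?_⟩
    exact h1.2.2 (l.getLast hlne) (by simp [List.getLast?_eq_getLast hlne]) a (by simp)
  have hlen' : l.length = n := hlen
  -- indexed versions
  have hidx : ∀ i : ℕ, i + 1 < n → E (l.getD i a) (l.getD (i + 1) a) := by
    intro i hi
    have h1 : i < l.length - 1 := by omega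
    have := List.isChain_iff_getElem.1 hchain'.1 i (by omega)
    rw [List.getD_eq_getElem l a (by omega), List.getD_eq_getElem l a (by omega)]
    simpa using this
  have hwrap : E (l.getD (n - 1) a) (l.getD 0 a) := by
    have h1 : l.getD (n - 1) a = l.getLast hlne := by
      rw [List.getLast_eq_getElem, List.getD_eq_getElem l a (by omega)]
      simp [hlen']
    have h2 : l.getD 0 a = a := by
      rw [List.getD_eq_getElem l a (by simp [hlen']; omega)]
      simp [hl]
    rw [h1, h2]
    exact hchain'.2
  -- build the bijection
  set f : ZMod n → V := fun i => l.getD i.val a with hf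
  have hinj : Function.Injective f := by
    intro i j hij
    have hi := ZMod.val_lt i
    have hj := ZMod.val_lt j
    rw [hf] at hij
    simp only at hij
    rw [List.getD_eq_getElem l a (by omega), List.getD_eq_getElem l a (by omega)] at hij
    have hget : l.get ⟨i.val, by omega⟩ = l.get ⟨j.val, by omega⟩ := by
      simpa using hij
    have := List.nodup_iff_injective_get.1 hnd hget
    have hval : i.val = j.val := by
      simpa using congrArg Fin.val this
    have : ((i.val : ℕ) : ZMod n) = ((j.val : ℕ) : ZMod n) := by rw [hval]
    rwa [ZMod.natCast_rightInverse i, ZMod.natCast_rightInverse j] at this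
  have hbij : Function.Bijective f := by
    rw [Fintype.bijective_iff_injective_and_card]
    exact ⟨hinj, by rw [ZMod.card]⟩
  refine ⟨Equiv.ofBijective f hbij, ?_⟩
  intro i
  simp only [Equiv.ofBijective_apply]
  have hi := ZMod.val_lt i
  have hval1 : (i + 1).val = (i.val + 1) % n := by
    rw [ZMod.val_add, ZMod.val_one_eq_one_mod, Nat.mod_eq_of_lt (show 1 < n by omega)]
  by_cases hcase : i.val + 1 < n
  · have : (i + 1).val = i.val + 1 := by
      rw [hval1, Nat.mod_eq_of_lt hcase]
    rw [hf]
    simp only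
    rw [this]
    exact hidx i.val hcase
  · have hieq : i.val = n - 1 := by omega
    have : (i + 1).val = 0 := by
      rw [hval1, hieq]
      have : n - 1 + 1 = n := by omega
      rw [this, Nat.mod_self]
    rw [hf]
    simp only
    rw [this, hieq]
    exact hwrap
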